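/- Let A, B be divisor classes on a smooth projective surface S with (A+B)² ≥ 17, A·B ≤ 4 and A·B ≥ B² + 1, and B² > 0, and assume the Hodge index inequality (A·B)² ≥ A²·B² holds (which it does since A² > 0). Then B² ≤ 2, and if B² ∈ {1,2} then A·B = 4. -/
import Mathlib


/- STATEMENT 6: numerical lemma on intersection numbers of divisor classes
A, B on a smooth projective surface.  The Néron–Severi group is modelled by
an additive group with a symmetric biadditive intersection pairing `i`. -/

theorem statement6 (Div : Type) [AddCommGroup Div]
    (i : Div → Div → ℤ)
    (isymm : ∀ a b, i a b = i b a)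
    (iaddl : ∀ a b c, i (a + b) c = i a c + i b c)
    (A B : Div)
    (hample : 17 ≤ i (A + B) (A + B))        -- (A+B)² ≥ 17, i.e. (L−K)² > 16
    (hAB4 : i A B ≤ 4)                        -- A·B ≤ length(Z'_p) ≤ 4
    (hABB : i B B + 1 ≤ i A B)                -- A·B ≥ B² + 1
    (hBpos : 0 < i B B)                       -- B² > 0
    (hodge : i A A * i B B ≤ (i A B) ^ 2) :   -- Hodge index inequality
    i B B ≤ 2 ∧ ((i B B = 1 ∨ i B B = 2) → i A B = 4) := by
  have hexp : i (A + B) (A + B) = i A A + 2 * i A B + i B B := by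
    have h1 := iaddl A B (A + B)
    have h2 := isymm A (A + B)
    have h3 := isymm B (A + B)
    rw [h1, h2, h3, iaddl A B A, iaddl A B B, isymm B A]
    ring
  rw [hexp] at hample
  constructor
  · nlinarith [sq_nonneg (i A B), sq_nonneg (i B B - 3)]
  · rintro (h | h) <;> nlinarith [sq_nonneg (i A B)]
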